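/- The sum over all α in IS_n of the length of the orbit of the point 1 under α equals the total number of chains in the chain decompositions of all elements of IS_n. -/

import Mathlib

def IsPInj (n : ℕ) (f : Fin n → Option (Fin n)) : Prop :=
  ∀ a b c, f a = some c → f b = some c → a = b

instance (n : ℕ) : DecidablePred (IsPInj n) := fun _ =>
  inferInstanceAs (Decidable (∀ _ _ _, _ → _ → _))

/-- The symmetric inverse semigroup `IS_n`: partial injective maps on `{1,…,n}`. -/
def PInj (n : ℕ) := {f : Fin n → Option (Fin n) // IsPInj n f}

instance (n : ℕ) : Fintype (PInj n) := Subtype.fintype _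

/-- `iterMap n f k x` is `f^k(x)` as a partial map. -/
def iterMap (n : ℕ) (f : Fin n → Option (Fin n)) : ℕ → Fin n → Option (Fin n)
  | 0, x => some x
  | k + 1, x => (f x).bind (iterMap n f k)

/-- Size of the domain of a partial injection. -/
def domCard (n : ℕ) (α : PInj n) : ℕ :=
  (Finset.univ.filter (fun x => α.val x ≠ none)).card

/-- `α` is nilpotent: some positive power is the empty map. -/
def Nilpotent (n : ℕ) (α : PInj n) : Prop :=
  ∃ k, 0 < k ∧ ∀ x, iterMap n α.val k x = none

/-- `|IS_m| = ∑_j binom(m,j)^2 j!`. -/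
def cardIS (m : ℕ) : ℕ := ∑ j ∈ Finset.range (m + 1), (m.choose j) ^ 2 * j.factorial


/-- Length of the orbit `{x, α(x), α²(x), …}` of `x` under `α`
(empty if `x ∉ dom α`). -/
def orbitLen (n : ℕ) (α : PInj n) (x : Fin n) : ℕ :=
  if α.val x = none then 0
  else (Finset.univ.filter (fun y => ∃ i < n, iterMap n α.val i x = some y)).card


-- auxiliary development
set_option linter.unusedSectionVars false

section PF
variable {γ β γ' β' : Type*}

def PInjOn (f : γ → Option β) : Prop := ∀ a b c, f a = some c → f b = some c → a = b

instance [DecidableEq γ] [DecidableEq β] [Fintype γ] [Fintype β] : DecidablePred (@PInjOn γ β) :=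
  fun _ => inferInstanceAs (Decidable (∀ _ _ _, _ → _ → _))

def PF (γ β : Type*) := {f : γ → Option β // PInjOn f}

instance [DecidableEq γ] [DecidableEq β] [Fintype γ] [Fintype β] : Fintype (PF γ β) :=
  Subtype.fintype _

def PF.congr (e1 : γ ≃ γ') (e2 : β ≃ β') : PF γ β ≃ PF γ' β' where
  toFun f := ⟨fun x => (f.1 (e1.symm x)).map e2, by
    intro a b c ha hb
    rw [Option.map_eq_some_iff] at ha hb
    obtain ⟨u, hu, hu'⟩ := ha; obtain ⟨v, hv, hv'⟩ := hb
    have : u = v := by subst hu'; exact e2.injective hv'.symm ▸ rfl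
    subst this
    have := f.2 _ _ _ hu hv
    exact e1.symm.injective this⟩
  invFun f := ⟨fun x => (f.1 (e1 x)).map e2.symm, by
    intro a b c ha hb
    rw [Option.map_eq_some_iff] at ha hb
    obtain ⟨u, hu, hu'⟩ := ha; obtain ⟨v, hv, hv'⟩ := hb
    have : u = v := by subst hu'; exact e2.symm.injective hv'.symm ▸ rfl
    subst this
    exact e1.injective (f.2 _ _ _ hu hv)⟩
  left_inv f := by
    apply Subtype.ext; funext x
    simp [Option.map_map]
  right_inv f := by
    apply Subtype.ext; funext x
    simp [Option.map_map]

section T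
variable {γ β : Type*} [Fintype γ] [Fintype β] [DecidableEq γ] [DecidableEq β]

noncomputable def pinv (f : γ → Option β) : β → Option γ :=
  fun b => if h : ∃ a, f a = some b then some h.choose else none

lemma pinv_some_imp {f : γ → Option β} {a b} (h : pinv f b = some a) : f a = some b := by
  unfold pinv at h
  split at h
  · rename_i hex
    obtain rfl : hex.choose = a := by injection h
    exact hex.choose_spec
  · exact absurd h (by simp)

lemma pinv_eq_some {f : γ → Option β} (hf : PInjOn f) {a b} :
    pinv f b = some a ↔ f a = some b := by
  refine ⟨pinv_some_imp, fun h => ?_⟩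
  unfold pinv
  have hex : ∃ a, f a = some b := ⟨a, h⟩
  rw [dif_pos hex]
  exact congrArg some (hf _ _ _ hex.choose_spec h)

lemma pinv_pinjOn (f : γ → Option β) : PInjOn (pinv f) := by
  intro b b' a hb hb'
  have h1 := pinv_some_imp hb
  have h2 := pinv_some_imp hb'
  rw [h1] at h2; injection h2

lemma pinv_pinv {f : γ → Option β} (hf : PInjOn f) : pinv (pinv f) = f := by
  funext a
  cases hfa : f a with
  | none =>
    cases hp : pinv (pinv f) a with
    | none => rfl
    | some b =>
      have := pinv_some_imp hp
      have := pinv_some_imp this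
      rw [hfa] at this; cases this
  | some b =>
    have h1 : pinv f b = some a := (pinv_eq_some hf).mpr hfa
    have h2 : pinv (pinv f) a = some b := (pinv_eq_some (pinv_pinjOn f)).mpr h1
    rw [h2]

noncomputable def PF.transpose : PF γ β ≃ PF β γ where
  toFun f := ⟨pinv f.1, pinv_pinjOn f.1⟩
  invFun g := ⟨pinv g.1, pinv_pinjOn g.1⟩
  left_inv f := Subtype.ext (pinv_pinv f.2)
  right_inv g := Subtype.ext (pinv_pinv g.2)
end T

section G
variable {γ β : Type*} [DecidableEq γ] [DecidableEq β]

lemma pmap_some_imp {p : β → Prop} {o : Option β} {H : ∀ a ∈ o, p a} {c : {y // p y}}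
    (h : Option.pmap (fun w hw => (⟨w, hw⟩ : {y // p y})) o H = some c) : o = some c.1 := by
  cases o with
  | none => cases h
  | some w => simp only [Option.pmap] at h; cases h; rfl

/-- prescribing value `none` at one point -/
def noneEquiv (x₀ : γ) : {f : PF γ β // f.1 x₀ = none} ≃ PF {x : γ // x ≠ x₀} β where
  toFun f := ⟨fun x => f.1.1 x.1, fun a b c ha hb => Subtype.ext (f.1.2 _ _ _ ha hb)⟩
  invFun g := ⟨⟨fun x => if h : x = x₀ then none else g.1 ⟨x, h⟩, by
      intro a b c ha hb
      dsimp only at ha hb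
      split at ha
      · cases ha
      · split at hb
        · cases hb
        · rename_i h1 h2
          exact Subtype.ext_iff.mp (g.2 ⟨a, h1⟩ ⟨b, h2⟩ c ha hb)⟩, by simp⟩
  left_inv f := by
    apply Subtype.ext; apply Subtype.ext; funext x
    by_cases h : x = x₀
    · simp [h, f.2]
    · simp [h]
  right_inv g := by
    apply Subtype.ext; funext x
    simp [x.2]

lemma pmap_some_iff {p : β → Prop} {o : Option β} {H : ∀ a ∈ o, p a} {c : {y // p y}} :
    Option.pmap (fun w hw => (⟨w, hw⟩ : {y // p y})) o H = some c ↔ o = some c.1 := by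
  cases o with
  | none => constructor <;> (intro hh; cases hh)
  | some w =>
    simp only [Option.pmap, Option.some_inj]
    constructor
    · intro hh; cases hh; rfl
    · intro hh
      exact Subtype.ext hh

lemma map_val_pmap {p : β → Prop} (o : Option β) (H : ∀ a ∈ o, p a) :
    Option.map Subtype.val (Option.pmap (fun w hw => (⟨w, hw⟩ : {y // p y})) o H) = o := by
  cases o <;> rfl

/-- prescribing `f (u j) = some (t j)` for a system of edges -/
noncomputable def edgesEquiv {m : ℕ} (u : Fin m → γ) (hu : Function.Injective u)
    (t : Fin m → β) (ht : Function.Injective t) :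
    {f : PF γ β // ∀ j, f.1 (u j) = some (t j)} ≃
      PF {x : γ // ∀ j, u j ≠ x} {y : β // ∀ j, t j ≠ y} where
  toFun f := ⟨fun x => Option.pmap (fun w hw => (⟨w, hw⟩ : {y : β // ∀ j, t j ≠ y}))
      (f.1.1 x.1) (by
        intro w hw j htj
        subst htj
        exact x.2 j (f.1.2 _ _ _ (f.2 j) hw)), by
      intro a b c ha hb
      dsimp only at ha hb
      have ha' := pmap_some_imp ha
      have hb' := pmap_some_imp hb
      exact Subtype.ext (f.1.2 _ _ _ ha' hb')⟩
  invFun g := ⟨⟨fun x => if h : ∃ j, u j = x then some (t h.choose)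
      else (g.1 ⟨x, fun j hj => h ⟨j, hj⟩⟩).map Subtype.val, by
      intro a b c ha hb
      dsimp only at ha hb
      split at ha
      · rename_i h1
        split at hb
        · rename_i h2
          injection ha with ha; injection hb with hb
          have : h1.choose = h2.choose := ht (by rw [ha, hb])
          rw [← h1.choose_spec, ← h2.choose_spec, this]
        · rename_i h2
          injection ha with ha
          rcases Option.map_eq_some_iff.mp hb with ⟨⟨w, hw⟩, _, hw2⟩
          exact absurd (ha.trans hw2.symm) (hw h1.choose)
      · rename_i h1
        split at hb
        · rename_i h2
          injection hb with hb
          rcases Option.map_eq_some_iff.mp ha with ⟨⟨w, hw⟩, _, hw2⟩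
          exact absurd (hb.trans hw2.symm) (hw h2.choose)
        · rename_i h2
          rcases Option.map_eq_some_iff.mp ha with ⟨⟨w, hw⟩, hw1, hw2⟩
          rcases Option.map_eq_some_iff.mp hb with ⟨⟨w', hw'⟩, hw1', hw2'⟩
          have hww : w = w' := hw2.trans hw2'.symm
          subst hww
          have hcc : (⟨w, hw⟩ : {y : β // ∀ j, t j ≠ y}) = ⟨w, hw'⟩ := rfl
          rw [← hcc] at hw1'
          exact Subtype.ext_iff.mp (g.2 _ _ _ hw1 hw1')⟩, by
      intro j
      have hex : ∃ j', u j' = u j := ⟨j, rfl⟩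
      dsimp only
      rw [dif_pos hex]
      exact congrArg (some ∘ t) (hu hex.choose_spec)⟩
  left_inv f := by
    apply Subtype.ext; apply Subtype.ext; funext x
    dsimp only
    by_cases h : ∃ j, u j = x
    · obtain ⟨j, rfl⟩ := h
      have hex : ∃ j', u j' = u j := ⟨j, rfl⟩
      rw [dif_pos hex, f.2 j]
      exact congrArg (some ∘ t) (hu hex.choose_spec)
    · rw [dif_neg h]
      exact map_val_pmap _ _
  right_inv g := by
    apply Subtype.ext; funext x
    have h : ¬ ∃ j, u j = x.1 := fun ⟨j, hj⟩ => x.2 j hj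
    apply Option.ext
    intro a
    simp only [Option.mem_def]
    rw [pmap_some_iff]
    rw [dif_neg h]
    constructor
    · intro hm
      rcases Option.map_eq_some_iff.mp hm with ⟨b, hb1, hb2⟩
      have hba : b = a := Subtype.ext hb2
      subst hba
      exact hb1
    · intro hg
      have hg' : g.1 ⟨x.1, fun j hj => h ⟨j, hj⟩⟩ = some a := hg
      rw [hg']; rfl
end G

section D

def bb (p q : ℕ) : ℕ := Fintype.card (PF (Fin p) (Fin q))

variable {γ β : Type*} [DecidableEq γ] [DecidableEq β] [Fintype γ] [Fintype β]

noncomputable def equivOfCard {p q : ℕ} (h1 : Fintype.card γ = p) (h2 : Fintype.card β = q) :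
    PF γ β ≃ PF (Fin p) (Fin q) :=
  PF.congr (Fintype.equivFinOfCardEq h1) (Fintype.equivFinOfCardEq h2)

lemma card_PF {p q : ℕ} (h1 : Fintype.card γ = p) (h2 : Fintype.card β = q) :
    Fintype.card (PF γ β) = bb p q :=
  Fintype.card_congr (equivOfCard h1 h2)

lemma card_ne (x₀ : γ) : Fintype.card {x : γ // x ≠ x₀} = Fintype.card γ - 1 := by
  have h := Fintype.card_subtype_compl (fun x : γ => x = x₀)
  rw [Fintype.card_subtype_eq] at h
  exact h

lemma bb_transpose (p q : ℕ) : bb p q = bb q p := Fintype.card_congr PF.transpose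

lemma bb_zero_right (p : ℕ) : bb p 0 = 1 := by
  show Fintype.card (PF (Fin p) (Fin 0)) = 1
  rw [Fintype.card_eq_one_iff]
  refine ⟨⟨fun _ => none, fun a b c hc => c.elim0⟩, fun g => ?_⟩
  apply Subtype.ext; funext x
  cases hgx : g.1 x with
  | none => rfl
  | some c => exact c.elim0

lemma bb_zero_left (q : ℕ) : bb 0 q = 1 := by
  rw [bb_transpose]; exact bb_zero_right q

noncomputable def singleEdgeEquiv (x₀ : γ) (v : β) :
    {f : PF γ β // f.1 x₀ = some v} ≃ PF {x : γ // x ≠ x₀} {y : β // y ≠ v} := by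
  refine (Equiv.subtypeEquivRight (fun f => ?_)).trans
    ((edgesEquiv (fun _ : Fin 1 => x₀) (fun a b _ => Subsingleton.elim a b)
      (fun _ : Fin 1 => v) (fun a b _ => Subsingleton.elim a b)).trans
      (PF.congr (Equiv.subtypeEquivRight (fun x => ?_)) (Equiv.subtypeEquivRight (fun y => ?_))))
  · exact ⟨fun hf _ => hf, fun hf => hf 0⟩
  · exact ⟨fun hh he => hh 0 he.symm, fun hh _ he => hh he.symm⟩
  · exact ⟨fun hh he => hh 0 he.symm, fun hh _ he => hh he.symm⟩

lemma card_split (x₀ : γ) : Fintype.card (PF γ β) =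
    Fintype.card {f : PF γ β // f.1 x₀ = none}
      + ∑ v : β, Fintype.card {f : PF γ β // f.1 x₀ = some v} := by
  rw [← Fintype.card_congr (Equiv.sigmaFiberEquiv (fun f : PF γ β => f.1 x₀))]
  rw [Fintype.card_sigma, Fintype.sum_option]

lemma bb_rec (p q : ℕ) : bb (p+1) (q+1) = bb p (q+1) + (q+1) * bb p q := by
  have x₀ : Fin (p+1) := 0
  have h := card_split (γ := Fin (p+1)) (β := Fin (q+1)) 0
  have hcard : Fintype.card (PF (Fin (p+1)) (Fin (q+1))) = bb (p+1) (q+1) := rfl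
  rw [hcard] at h
  have h1 : Fintype.card {f : PF (Fin (p+1)) (Fin (q+1)) // f.1 0 = none} = bb p (q+1) := by
    rw [Fintype.card_congr (noneEquiv 0)]
    exact card_PF (by simp [card_ne]) (by simp)
  have h2 : ∀ v : Fin (q+1),
      Fintype.card {f : PF (Fin (p+1)) (Fin (q+1)) // f.1 0 = some v} = bb p q := by
    intro v
    rw [Fintype.card_congr (singleEdgeEquiv 0 v)]
    exact card_PF (by simp [card_ne]) (by simp [card_ne])
  rw [h1] at h
  rw [Finset.sum_congr rfl (fun v _ => h2 v)] at h
  simpa using h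

lemma R1 (m : ℕ) : bb (m+1) (m+1) = bb m (m+1) + (m+1) * bb m m := bb_rec m m

lemma R2 (m : ℕ) : bb (m+1) (m+2) = bb (m+1) (m+1) + (m+1) * bb m (m+1) := by
  rw [bb_transpose (m+1) (m+2), bb_rec (m+1) m, bb_transpose (m+1) m]

lemma key (n : ℕ) :
    ∑ k ∈ Finset.range (n+1), (n.descFactorial k) * bb (n+1-k) (n+1-k)
      = (n+2) * bb n (n+1) := by
  induction n with
  | zero =>
    rw [Finset.sum_range_one]
    norm_num [R1 0, bb_zero_left, bb_zero_right]
  | succ n ih =>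
    rw [Finset.sum_range_succ']
    have hshift : ∀ k ∈ Finset.range (n+1),
        ((n+1).descFactorial (k+1)) * bb (n+2-(k+1)) (n+2-(k+1))
          = (n+1) * ((n.descFactorial k) * bb (n+1-k) (n+1-k)) := by
      intro k hk
      rw [Nat.succ_descFactorial_succ]
      have : n + 2 - (k+1) = n + 1 - k := by omega
      rw [this]; ring
    rw [Finset.sum_congr rfl hshift, ← Finset.mul_sum, ih]
    simp only [Nat.descFactorial_zero, one_mul, Nat.sub_zero]
    rw [R1 (n+1), R2 n, R1 n]
    ring
end D

-- chunk e
def pinjEquiv (n : ℕ) : PInj n ≃ PF (Fin n) (Fin n) :=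
  ⟨fun f => ⟨f.1, f.2⟩, fun f => ⟨f.1, f.2⟩, fun _ => rfl, fun _ => rfl⟩

section E
variable (n : ℕ)

lemma iter_add (f : Fin n → Option (Fin n)) (i j : ℕ) (x : Fin n) :
    iterMap n f (i + j) x = (iterMap n f i x).bind (iterMap n f j) := by
  induction i generalizing x with
  | zero => rw [Nat.zero_add]; rfl
  | succ i ih =>
    have e : i + 1 + j = (i + j) + 1 := by omega
    rw [e]
    show (f x).bind (iterMap n f (i + j)) = ((f x).bind (iterMap n f i)).bind (iterMap n f j)
    cases f x with
    | none => rfl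
    | some y => exact ih y

lemma iter_one (f : Fin n → Option (Fin n)) (x : Fin n) : iterMap n f 1 x = f x := by
  show (f x).bind (iterMap n f 0) = f x
  cases f x <;> rfl

lemma iter_none_mono (f : Fin n → Option (Fin n)) {x : Fin n} {i j : ℕ} (hij : i ≤ j)
    (hi : iterMap n f i x = none) : iterMap n f j x = none := by
  obtain ⟨d, rfl⟩ := Nat.exists_eq_add_of_le hij
  rw [iter_add, hi]; rfl

variable (h : 0 < n)

def zf (α : PInj n) (k : ℕ) : Option (Fin n) := iterMap n α.1 k ⟨0, h⟩

lemma zf_add (α : PInj n) (i j : ℕ) :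
    zf n h α (i + j) = (zf n h α i).bind (iterMap n α.1 j) := iter_add n α.1 i j _

lemma zf_succ (α : PInj n) (k : ℕ) : zf n h α (k + 1) = (zf n h α k).bind α.1 := by
  rw [zf_add]
  cases zf n h α k with
  | none => rfl
  | some y => show iterMap n α.1 1 y = α.1 y; exact iter_one n α.1 y

def good (α : PInj n) (k : ℕ) : Prop :=
  zf n h α k ≠ none ∧ ∀ i ≤ k, ∀ j ≤ k, zf n h α i = zf n h α j → i = j

instance (α : PInj n) : DecidablePred (good n h α) := fun k => by
  unfold good; infer_instance

lemma good_zero (α : PInj n) : good n h α 0 :=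
  ⟨by show some _ ≠ none; simp, fun i hi j hj _ => by omega⟩

lemma good_mono {α : PInj n} {k j : ℕ} (hg : good n h α k) (hjk : j ≤ k) : good n h α j :=
  ⟨fun hn => hg.1 (iter_none_mono n α.1 hjk hn),
   fun i hi j' hj' he => hg.2 i (le_trans hi hjk) j' (le_trans hj' hjk) he⟩

lemma zf_some {α : PInj n} {k i : ℕ} (hg : good n h α k) (hik : i ≤ k) :
    ∃ a, zf n h α i = some a :=
  Option.ne_none_iff_exists'.mp (good_mono n h hg hik).1

lemma good_lt {α : PInj n} {k : ℕ} (hg : good n h α k) : k < n := by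
  have hinj : Function.Injective (fun i : Fin (k+1) => (zf n h α i.1).getD ⟨0,h⟩) := by
    intro i j hij
    obtain ⟨a, ha⟩ := zf_some n h hg (Nat.lt_succ_iff.mp i.isLt)
    obtain ⟨b, hb⟩ := zf_some n h hg (Nat.lt_succ_iff.mp j.isLt)
    simp only [ha, hb, Option.getD_some] at hij
    have : zf n h α i.1 = zf n h α j.1 := by rw [ha, hb, hij]
    exact Fin.ext (hg.2 i.1 (Nat.lt_succ_iff.mp i.isLt) j.1 (Nat.lt_succ_iff.mp j.isLt) this)
  have hle := Fintype.card_le_of_injective _ hinj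
  simp only [Fintype.card_fin] at hle
  omega

lemma good_inj {α : PInj n} {k₁ k₂ : ℕ} (h1 : good n h α k₁) (h2 : good n h α k₂)
    (he : (zf n h α k₁).getD ⟨0,h⟩ = (zf n h α k₂).getD ⟨0,h⟩) : k₁ = k₂ := by
  obtain ⟨a, ha⟩ := zf_some n h h1 le_rfl
  obtain ⟨b, hb⟩ := zf_some n h h2 le_rfl
  simp only [ha, hb, Option.getD_some] at he
  have hzz : zf n h α k₁ = zf n h α k₂ := by rw [ha, hb, he]
  rcases le_total k₁ k₂ with hle | hle
  · exact h2.2 k₁ hle k₂ le_rfl hzz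
  · exact (h1.2 k₂ hle k₁ le_rfl hzz.symm).symm

lemma reach (α : PInj n) (y : Fin n) : ∀ i, zf n h α i = some y →
    ∃ k, k ≤ i ∧ good n h α k ∧ zf n h α k = some y := by
  intro i
  induction i using Nat.strong_induction_on with
  | _ i IH =>
    intro hi
    by_cases hg : good n h α i
    · exact ⟨i, le_rfl, hg, hi⟩
    · have hne : zf n h α i ≠ none := by rw [hi]; simp
      unfold good at hg
      push_neg at hg
      obtain ⟨r, hr, s, hs, heq, hrs⟩ := hg hne
      have key2 : ∀ r s, r < s → s ≤ i → zf n h α r = zf n h α s →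
          zf n h α (r + (i - s)) = some y := by
        intro r s hlt hsi he
        have h1 : zf n h α (s + (i - s)) = some y := by
          rw [show s + (i - s) = i from by omega]; exact hi
        rw [zf_add, ← he, ← zf_add] at h1
        exact h1
      rcases Ne.lt_or_gt hrs with hlt | hlt
      · obtain ⟨k, hk1, hk2, hk3⟩ := IH (r + (i - s)) (by omega) (key2 r s hlt hs heq)
        exact ⟨k, by omega, hk2, hk3⟩
      · obtain ⟨k, hk1, hk2, hk3⟩ := IH (s + (i - r)) (by omega) (key2 s r hlt hr heq.symm)
        exact ⟨k, by omega, hk2, hk3⟩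

lemma orbit_card (α : PInj n) :
    (Finset.univ.filter (fun y => ∃ i < n, iterMap n α.val i ⟨0,h⟩ = some y)).card
      = ((Finset.range n).filter (good n h α)).card := by
  have hset : Finset.univ.filter (fun y => ∃ i < n, iterMap n α.val i ⟨0,h⟩ = some y)
      = ((Finset.range n).filter (good n h α)).image (fun k => (zf n h α k).getD ⟨0,h⟩) := by
    ext y
    simp only [Finset.mem_filter, Finset.mem_univ, true_and, Finset.mem_image,
      Finset.mem_range]
    constructor
    · rintro ⟨i, hin, hiy⟩
      obtain ⟨k, hki, hgk, hky⟩ := reach n h α y i hiy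
      exact ⟨k, ⟨good_lt n h hgk, hgk⟩, by rw [hky]; rfl⟩
    · rintro ⟨k, ⟨hkn, hgk⟩, rfl⟩
      obtain ⟨a, ha⟩ := zf_some n h hgk le_rfl
      exact ⟨k, hkn, by rw [ha]; exact ha⟩
  rw [hset]
  apply Finset.card_image_of_injOn
  intro k₁ hk₁ k₂ hk₂ he
  simp only [Finset.coe_filter, Set.mem_setOf_eq, Finset.mem_range] at hk₁ hk₂
  exact good_inj n h hk₁.2 hk₂.2 he

lemma filter_good_of_none {α : PInj n} (hα : α.val ⟨0,h⟩ = none) :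
    (Finset.range n).filter (good n h α) = {0} := by
  ext k
  simp only [Finset.mem_filter, Finset.mem_range, Finset.mem_singleton]
  constructor
  · rintro ⟨hkn, hgk⟩
    by_contra hk0
    have h1 : zf n h α 1 = none := by
      show iterMap n α.1 1 ⟨0,h⟩ = none
      rw [iter_one]; exact hα
    exact hgk.1 (iter_none_mono n α.1 (by omega) h1)
  · rintro rfl
    exact ⟨h, good_zero n h α⟩

lemma orbitLen_plus (α : PInj n) :
    orbitLen n α ⟨0,h⟩ + (if α.val ⟨0,h⟩ = none then 1 else 0)
      = ((Finset.range n).filter (good n h α)).card := by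
  unfold orbitLen
  by_cases hα : α.val ⟨0,h⟩ = none
  · rw [if_pos hα, if_pos hα, filter_good_of_none n h hα]
    simp
  · rw [if_neg hα, if_neg hα, orbit_card n h α]; omega

lemma vmap_inj {α : PInj n} {k : ℕ} (hg : good n h α k) :
    Function.Injective (fun i : Fin (k+1) => (zf n h α i.1).getD ⟨0,h⟩) := by
  intro i j hij
  obtain ⟨a, ha⟩ := zf_some n h hg (Nat.lt_succ_iff.mp i.isLt)
  obtain ⟨b, hb⟩ := zf_some n h hg (Nat.lt_succ_iff.mp j.isLt)
  simp only [ha, hb, Option.getD_some] at hij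
  have hzz : zf n h α i.1 = zf n h α j.1 := by rw [ha, hb, hij]
  exact Fin.ext (hg.2 i.1 (Nat.lt_succ_iff.mp i.isLt) j.1 (Nat.lt_succ_iff.mp j.isLt) hzz)

def Phi {k : ℕ} (p : {α : PInj n // good n h α k}) :
    {w : Fin (k+1) ↪ Fin n // w 0 = ⟨0,h⟩} :=
  ⟨⟨fun i => (zf n h p.1 i.1).getD ⟨0,h⟩, vmap_inj n h p.2⟩, rfl⟩

lemma edges_of_good {α : PInj n} {k : ℕ} (hg : good n h α k) (j : Fin k) :
    α.1 ((zf n h α j.1).getD ⟨0,h⟩) = some ((zf n h α (j.1+1)).getD ⟨0,h⟩) := by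
  obtain ⟨a, ha⟩ := zf_some n h hg (le_of_lt j.isLt)
  obtain ⟨b, hb⟩ := zf_some n h hg j.isLt
  have hsucc := zf_succ n h α j.1
  rw [ha, hb] at hsucc ⊢
  simp only [Option.getD_some]
  exact hsucc.symm

lemma zf_of_edges {α : PInj n} {k : ℕ} (w : Fin (k+1) ↪ Fin n) (hw0 : w 0 = ⟨0,h⟩)
    (he : ∀ j : Fin k, α.1 (w j.castSucc) = some (w j.succ)) :
    ∀ i, (hi : i ≤ k) → zf n h α i = some (w ⟨i, by omega⟩) := by
  intro i
  induction i with
  | zero =>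
    intro _
    show some (⟨0,h⟩ : Fin n) = some (w ⟨0, by omega⟩)
    rw [show (⟨0, by omega⟩ : Fin (k+1)) = 0 from rfl, hw0]
  | succ i ih =>
    intro hik
    rw [zf_succ, ih (by omega)]
    show α.1 (w ⟨i, by omega⟩) = some (w ⟨i+1, by omega⟩)
    exact he ⟨i, by omega⟩

lemma good_of_edges {α : PInj n} {k : ℕ} (w : Fin (k+1) ↪ Fin n) (hw0 : w 0 = ⟨0,h⟩)
    (he : ∀ j : Fin k, α.1 (w j.castSucc) = some (w j.succ)) : good n h α k := by
  constructor
  · rw [zf_of_edges n h w hw0 he k le_rfl]; simp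
  · intro i hi j hj hij
    rw [zf_of_edges n h w hw0 he i hi, zf_of_edges n h w hw0 he j hj] at hij
    have := w.injective (Option.some_injective _ hij)
    exact congrArg Fin.val this

lemma Phi_eq {k : ℕ} (p : {α : PInj n // good n h α k}) (w : Fin (k+1) ↪ Fin n)
    (hw0 : w 0 = ⟨0,h⟩) (he : ∀ j : Fin k, p.1.1 (w j.castSucc) = some (w j.succ)) :
    Phi n h p = ⟨w, hw0⟩ := by
  apply Subtype.ext
  apply DFunLike.ext
  intro i
  show (zf n h p.1 i.1).getD ⟨0,h⟩ = w i
  rw [zf_of_edges n h w hw0 he i.1 (Nat.lt_succ_iff.mp i.isLt)]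
  show w ⟨i.1, i.isLt⟩ = w i
  rfl

def fiberEquiv {k : ℕ} (w : {w : Fin (k+1) ↪ Fin n // w 0 = ⟨0,h⟩}) :
    {p : {α : PInj n // good n h α k} // Phi n h p = w} ≃
      {α : PInj n // ∀ j : Fin k, α.1 (w.1 j.castSucc) = some (w.1 j.succ)} where
  toFun p := ⟨p.1.1, by
    intro j
    have hv : ∀ i, w.1 i = (zf n h p.1.1 i.1).getD ⟨0,h⟩ := fun i =>
      (congrArg (fun q : {w : Fin (k+1) ↪ Fin n // w 0 = ⟨0,h⟩} => q.1 i) p.2).symm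
    rw [hv j.castSucc, hv j.succ]
    exact edges_of_good n h p.1.2 j⟩
  invFun α := ⟨⟨α.1, good_of_edges n h w.1 w.2 α.2⟩, by
    rw [Phi_eq n h _ w.1 w.2 α.2]⟩
  left_inv p := Subtype.ext (Subtype.ext rfl)
  right_inv α := Subtype.ext rfl

lemma card_avoid {m : ℕ} (u : Fin m → Fin n) (hu : Function.Injective u) :
    Fintype.card {x : Fin n // ∀ j, u j ≠ x} = n - m := by
  rw [Fintype.card_subtype]
  have hs : Finset.univ.filter (fun x : Fin n => ∀ j, u j ≠ x)
      = Finset.univ \ Finset.univ.image u := by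
    ext x
    simp [eq_comm]
  rw [hs, Finset.card_sdiff_of_subset (Finset.subset_univ _),
    Finset.card_image_of_injective _ hu]
  simp

lemma card_fiber {k : ℕ} (w : {w : Fin (k+1) ↪ Fin n // w 0 = ⟨0,h⟩}) :
    Fintype.card {α : PInj n // ∀ j : Fin k, α.1 (w.1 j.castSucc) = some (w.1 j.succ)}
      = bb (n-k) (n-k) := by
  rw [Fintype.card_congr (Equiv.subtypeEquiv (pinjEquiv n) (fun α => Iff.rfl))]
  rw [Fintype.card_congr (edgesEquiv (fun j : Fin k => w.1 j.castSucc)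
    (w.1.injective.comp (Fin.castSucc_injective k))
    (fun j : Fin k => w.1 j.succ)
    (w.1.injective.comp (Fin.succ_injective k)))]
  exact card_PF (card_avoid n _ (w.1.injective.comp (Fin.castSucc_injective k)))
    (card_avoid n _ (w.1.injective.comp (Fin.succ_injective k)))

def WEquiv {k : ℕ} (x₀ : Fin n) :
    {w : Fin (k+1) ↪ Fin n // w 0 = x₀} ≃ (Fin k ↪ {y : Fin n // y ≠ x₀}) where
  toFun w := ⟨fun j => ⟨w.1 j.succ,
      fun hy => (Fin.succ_ne_zero j) (w.1.injective (hy.trans w.2.symm))⟩,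
    fun a b hab => Fin.succ_injective _ (w.1.injective (Subtype.ext_iff.mp hab))⟩
  invFun e := ⟨⟨Fin.cases x₀ (fun j => (e j).1), by
    intro a b hab
    induction a using Fin.cases with
    | zero =>
      induction b using Fin.cases with
      | zero => rfl
      | succ j =>
        simp only [Fin.cases_zero, Fin.cases_succ] at hab
        exact absurd hab.symm (e j).2
    | succ i =>
      induction b using Fin.cases with
      | zero =>
        simp only [Fin.cases_zero, Fin.cases_succ] at hab
        exact absurd hab (e i).2
      | succ j =>
        simp only [Fin.cases_succ] at hab
        exact congrArg Fin.succ (e.injective (Subtype.ext hab))⟩, rfl⟩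
  left_inv w := by
    apply Subtype.ext
    apply DFunLike.ext
    intro i
    induction i using Fin.cases with
    | zero => exact w.2.symm
    | succ j => rfl
  right_inv e := by
    apply DFunLike.ext
    intro j
    apply Subtype.ext
    rfl

lemma card_W {k : ℕ} :
    Fintype.card {w : Fin (k+1) ↪ Fin n // w 0 = (⟨0,h⟩ : Fin n)}
      = (n-1).descFactorial k := by
  rw [Fintype.card_congr (WEquiv n (⟨0,h⟩ : Fin n))]
  rw [Fintype.card_embedding_eq]
  rw [card_ne]
  simp

lemma card_good (k : ℕ) : Fintype.card {α : PInj n // good n h α k}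
    = (n-1).descFactorial k * bb (n-k) (n-k) := by
  rw [Fintype.card_congr (Equiv.sigmaFiberEquiv (Phi n h (k := k))).symm]
  rw [Fintype.card_sigma]
  rw [Finset.sum_congr rfl
    (fun w _ => (Fintype.card_congr (fiberEquiv n h w)).trans (card_fiber n h w))]
  rw [Finset.sum_const, Finset.card_univ, card_W n h, smul_eq_mul]
end E

section Final

lemma card_none_at (n : ℕ) (x : Fin n) :
    Fintype.card {α : PInj n // α.val x = none} = bb (n-1) n := by
  rw [Fintype.card_congr (Equiv.subtypeEquiv (pinjEquiv n) (fun α => Iff.rfl))]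
  rw [Fintype.card_congr (noneEquiv x)]
  exact card_PF (by rw [card_ne]; simp) (by simp)

lemma rhs_eq (n : ℕ) : ∑ α : PInj n, (n - domCard n α) = n * bb (n-1) n := by
  have hpt : ∀ α : PInj n, n - domCard n α
      = (Finset.univ.filter (fun x => α.val x = none)).card := by
    intro α
    have hc := Finset.card_filter_add_card_filter_not (s := Finset.univ)
      (p := fun x : Fin n => α.val x ≠ none)
    have he : Finset.univ.filter (fun x : Fin n => ¬ (α.val x ≠ none))
        = Finset.univ.filter (fun x : Fin n => α.val x = none) := by
      apply Finset.filter_congr; intro x _; simp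
    rw [he] at hc
    have hu : (Finset.univ : Finset (Fin n)).card = n := by simp
    rw [hu] at hc
    unfold domCard
    omega
  calc ∑ α : PInj n, (n - domCard n α)
      = ∑ α : PInj n, ∑ x : Fin n, (if α.val x = none then 1 else 0) := by
        refine Finset.sum_congr rfl (fun α _ => ?_)
        rw [hpt α, Finset.card_filter]
    _ = ∑ x : Fin n, ∑ α : PInj n, (if α.val x = none then 1 else 0) := Finset.sum_comm
    _ = ∑ x : Fin n, bb (n-1) n := by
        refine Finset.sum_congr rfl (fun x _ => ?_)
        rw [← Finset.card_filter, ← Fintype.card_subtype]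
        exact card_none_at n x
    _ = n * bb (n-1) n := by simp [Finset.sum_const, Finset.card_univ]

lemma lhs_eq (n : ℕ) (h : 0 < n) : (∑ α : PInj n, orbitLen n α ⟨0,h⟩) + bb (n-1) n
    = ∑ k ∈ Finset.range n, (n-1).descFactorial k * bb (n-k) (n-k) := by
  have h1 : (∑ α : PInj n, orbitLen n α ⟨0,h⟩)
        + (∑ α : PInj n, if α.val ⟨0,h⟩ = none then (1:ℕ) else 0)
      = ∑ α : PInj n, ((Finset.range n).filter (good n h α)).card := by
    rw [← Finset.sum_add_distrib]
    exact Finset.sum_congr rfl (fun α _ => orbitLen_plus n h α)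
  have h2 : (∑ α : PInj n, if α.val ⟨0,h⟩ = none then (1:ℕ) else 0) = bb (n-1) n := by
    rw [← Finset.card_filter, ← Fintype.card_subtype]
    exact card_none_at n ⟨0,h⟩
  have h3 : ∑ α : PInj n, ((Finset.range n).filter (good n h α)).card
      = ∑ k ∈ Finset.range n, (n-1).descFactorial k * bb (n-k) (n-k) := by
    calc ∑ α : PInj n, ((Finset.range n).filter (good n h α)).card
        = ∑ α : PInj n, ∑ k ∈ Finset.range n, (if good n h α k then (1:ℕ) else 0) := by
          exact Finset.sum_congr rfl (fun α _ => Finset.card_filter _ _)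
      _ = ∑ k ∈ Finset.range n, ∑ α : PInj n, (if good n h α k then (1:ℕ) else 0) :=
          Finset.sum_comm
      _ = ∑ k ∈ Finset.range n, (n-1).descFactorial k * bb (n-k) (n-k) := by
          refine Finset.sum_congr rfl (fun k _ => ?_)
          rw [← Finset.card_filter, ← Fintype.card_subtype]
          exact card_good n h k
  rw [← h3, ← h1, h2]
end Final

theorem stmt10 (n : ℕ) (h : 0 < n) :
    ∑ α : PInj n, orbitLen n α ⟨0, h⟩ = ∑ α : PInj n, (n - domCard n α) := by
  obtain ⟨m, rfl⟩ : ∃ m, n = m + 1 := ⟨n - 1, by omega⟩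
  have hl := lhs_eq (m+1) h
  simp only [Nat.add_sub_cancel] at hl
  have hr := rhs_eq (m+1)
  simp only [Nat.add_sub_cancel] at hr
  rw [hr]
  have h5 : (∑ α : PInj (m+1), orbitLen (m+1) α ⟨0,h⟩) + bb m (m+1)
      = (m+2) * bb m (m+1) := by rw [hl]; exact key m
  have h4 : (m+2) * bb m (m+1) = (m+1) * bb m (m+1) + bb m (m+1) := by ring
  exact Nat.add_right_cancel (h5.trans h4)
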